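/- Let λ_ℓ : ℝ → ℂ be continuous functions, one for each letter ℓ ∈ A. For t ∈ ℝ define α(t) ∈ ℂ^W by α(t)_∅ = 1 and, for a nonempty word ℓ₁⋯ℓ_n, α(t)_{ℓ₁⋯ℓ_n} = ∫₀^t dt_n λ_{ℓ_n}(t_n) ∫₀^{t_n} dt_{n−1} λ_{ℓ_{n−1}}(t_{n−1}) ⋯ ∫₀^{t₂} dt₁ λ_{ℓ₁}(t₁). Then α(t) ∈ G for every t ∈ ℝ, i.e. the iterated-integral coefficients satisfy the shuffle relations. -/

import Mathlib

open scoped BigOperators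

/-- Convolution product on `ℂ^W`: `(δ★δ′)_w = Σ_{w=w₁w₂} δ_{w₁} δ′_{w₂}`. -/
noncomputable def conv {A : Type*} (x y : List A → ℂ) : List A → ℂ :=
  fun w => ∑ i ∈ Finset.range (w.length + 1), x (w.take i) * y (w.drop i)

/-- Shuffle product of two words, as a multiset of words. -/
def shuffle {A : Type*} : List A → List A → Multiset (List A)
  | [], w => {w}
  | w, [] => {w}
  | a :: u, b :: v =>
      ((shuffle u (b :: v)).map (a :: ·)) + ((shuffle (a :: u) v).map (b :: ·))

lemma shuffle_nil_left {A : Type*} (w : List A) : shuffle [] w = {w} := by cases w <;> simp [shuffle]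

lemma shuffle_nil_right {A : Type*} (w : List A) : shuffle w [] = {w} := by cases w <;> simp [shuffle]

theorem shuffle_concat {A : Type*} : ∀ (x y : List A) (a b : A),
    shuffle (x ++ [a]) (y ++ [b]) =
      ((shuffle x (y ++ [b])).map (· ++ [a])) + ((shuffle (x ++ [a]) y).map (· ++ [b]))
  | [], [], a, b => by
      simp [shuffle, shuffle_nil_right, shuffle_nil_left]
      exact Multiset.cons_swap _ _ _
  | [], c :: y, a, b => by
      have IH := shuffle_concat ([] : List A) y a b
      simp only [List.nil_append, List.cons_append] at *
      simp [shuffle, IH, shuffle_nil_left, shuffle_nil_right, Multiset.map_map,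
        Function.comp, List.cons_append, List.append_assoc, add_comm, add_left_comm, add_assoc]
      exact Multiset.cons_swap _ _ _
  | c :: x, [], a, b => by
      have IH := shuffle_concat x ([] : List A) a b
      simp only [List.nil_append, List.cons_append] at *
      simp [shuffle, IH, shuffle_nil_left, shuffle_nil_right, Multiset.map_map,
        Function.comp, List.cons_append, List.append_assoc, add_comm, add_left_comm, add_assoc]
      exact Multiset.cons_swap _ _ _
  | c :: x, d :: y, a, b => by
      have IH1 := shuffle_concat x (d :: y) a b
      have IH2 := shuffle_concat (c :: x) y a b
      simp only [List.cons_append] at *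
      simp [shuffle, IH1, IH2, Multiset.map_map, Function.comp,
        List.cons_append, List.append_assoc, add_comm, add_left_comm, add_assoc]
termination_by x y => x.length + y.length
decreasing_by all_goals simp <;> omega

/-- Membership in the group `G`: the shuffle relations with `γ_∅ = 1`. -/
def isGrp {A : Type*} (γ : List A → ℂ) : Prop :=
  γ [] = 1 ∧ ∀ w w' : List A, γ w * γ w' = ((shuffle w w').map γ).sum

/-- Membership in the Lie algebra `𝔤`. -/
def isLie {A : Type*} (β : List A → ℂ) : Prop :=
  β [] = 0 ∧ ∀ w w' : List A, w ≠ [] → w' ≠ [] → ((shuffle w w').map β).sum = 0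

/-- The unit `1` of the convolution product. -/
def unitCW {A : Type*} : List A → ℂ := fun w => match w with | [] => 1 | _ => 0

/-- Iterated integrals, with the word given in reversed order (outermost integration
variable paired with the head letter):
`iterInt λ [ℓ_n,…,ℓ₁] t = ∫₀^t λ_{ℓ_n}(s) · iterInt λ [ℓ_{n−1},…,ℓ₁] s ds`. -/
noncomputable def iterInt {A : Type*} (lam : A → ℝ → ℂ) : List A → ℝ → ℂ
  | [], _ => 1
  | ℓ :: w, t => ∫ s in (0:ℝ)..t, lam ℓ s * iterInt lam w s

section analytic
variable {A : Type*}

lemma iterInt_nil (lam : A → ℝ → ℂ) : iterInt lam [] = fun _ => 1 := by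
  funext t; simp [iterInt]

lemma iterInt_cons (lam : A → ℝ → ℂ) (ℓ : A) (w : List A) :
    iterInt lam (ℓ :: w) = fun t => ∫ s in (0:ℝ)..t, lam ℓ s * iterInt lam w s := by
  funext t; simp [iterInt]

lemma iterInt_cont (lam : A → ℝ → ℂ) (hcont : ∀ ℓ : A, Continuous (lam ℓ)) :
    ∀ w : List A, Continuous (iterInt lam w)
  | [] => by rw [iterInt_nil]; exact continuous_const
  | ℓ :: w => by
    have h : Continuous fun s => lam ℓ s * iterInt lam w s :=
      (hcont ℓ).mul (iterInt_cont lam hcont w)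
    rw [iterInt_cons]
    exact intervalIntegral.continuous_primitive (fun a b => h.intervalIntegrable a b) 0

lemma iterInt_hasDerivAt (lam : A → ℝ → ℂ) (hcont : ∀ ℓ : A, Continuous (lam ℓ))
    (ℓ : A) (w : List A) (t : ℝ) :
    HasDerivAt (iterInt lam (ℓ :: w)) (lam ℓ t * iterInt lam w t) t := by
  have h : Continuous fun s => lam ℓ s * iterInt lam w s :=
    (hcont ℓ).mul (iterInt_cont lam hcont w)
  rw [iterInt_cons]
  exact intervalIntegral.integral_hasDerivAt_right (h.intervalIntegrable 0 t)
    (h.stronglyMeasurable.stronglyMeasurableAtFilter) h.continuousAt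

lemma iterInt_cons_zero (lam : A → ℝ → ℂ) (ℓ : A) (w : List A) :
    iterInt lam (ℓ :: w) 0 = 0 := by simp [iterInt]

lemma multiset_hasDerivAt {M : Multiset (List A)} {g : List A → ℝ → ℂ} {g' : List A → ℂ}
    {t : ℝ} (h : ∀ w ∈ M, HasDerivAt (g w) (g' w) t) :
    HasDerivAt (fun t => (M.map (fun w => g w t)).sum) ((M.map g').sum) t := by
  induction M using Multiset.induction_on with
  | empty => simpa using hasDerivAt_const t (0 : ℂ)
  | cons a s ih =>
    simp only [Multiset.map_cons, Multiset.sum_cons]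
    exact (h a (Multiset.mem_cons_self a s)).add
      (ih fun w hw => h w (Multiset.mem_cons_of_mem hw))

lemma key (lam : A → ℝ → ℂ) (hcont : ∀ ℓ : A, Continuous (lam ℓ)) :
    ∀ (n : ℕ) (u v : List A), u.length + v.length ≤ n → ∀ t : ℝ,
    iterInt lam u.reverse t * iterInt lam v.reverse t =
      ((shuffle u v).map (fun s => iterInt lam s.reverse t)).sum := by
  intro n
  induction n with
  | zero =>
    intro u v h t
    have hu : u = [] := by cases u <;> simp_all
    have hv : v = [] := by cases v <;> simp_all
    subst hu; subst hv
    simp [shuffle_nil_left, iterInt]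
  | succ n ih =>
    intro u v hlen t
    rcases u.eq_nil_or_concat with rfl | ⟨x, a, rfl⟩
    · simp [shuffle_nil_left, iterInt]
    rcases v.eq_nil_or_concat with rfl | ⟨y, b, rfl⟩
    · simp [shuffle_nil_right, iterInt]
    simp only [List.concat_eq_append] at hlen ⊢
    set F : List A → ℝ → ℂ := fun s t => iterInt lam s.reverse t with hF
    have hrev : ∀ (s : List A) (c : A), (s ++ [c]).reverse = c :: s.reverse := by simp
    have hderF : ∀ (s : List A) (c : A) (r : ℝ),
        HasDerivAt (F (s ++ [c])) (lam c r * F s r) r := by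
      intro s c r
      have := iterInt_hasDerivAt lam hcont c s.reverse r
      simp only [hF, hrev]
      exact this
    have hzero : ∀ (s : List A) (c : A), F (s ++ [c]) 0 = 0 := by
      intro s c
      simp only [hF, hrev]
      exact iterInt_cons_zero lam c s.reverse
    have hlx : x.length + (y ++ [b]).length ≤ n := by
      simp only [List.length_append, List.length_cons, List.length_nil] at hlen ⊢; omega
    have hly : (x ++ [a]).length + y.length ≤ n := by
      simp only [List.length_append, List.length_cons, List.length_nil] at hlen ⊢; omega
    have ih1 : ∀ r : ℝ, ((shuffle x (y ++ [b])).map (fun s => F s r)).sum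
        = F x r * F (y ++ [b]) r := fun r => (ih x (y ++ [b]) hlx r).symm
    have ih2 : ∀ r : ℝ, ((shuffle (x ++ [a]) y).map (fun s => F s r)).sum
        = F (x ++ [a]) r * F y r := fun r => (ih (x ++ [a]) y hly r).symm
    have hL : ∀ r : ℝ, HasDerivAt (fun t => F (x ++ [a]) t * F (y ++ [b]) t)
        (lam a r * F x r * F (y ++ [b]) r + F (x ++ [a]) r * (lam b r * F y r)) r :=
      fun r => (hderF x a r).mul (hderF y b r)
    have hshuf := shuffle_concat x y a b
    have hfun : ∀ r : ℝ, ((shuffle (x ++ [a]) (y ++ [b])).map (fun s => F s r)).sum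
        = ((shuffle x (y ++ [b])).map (fun s => F (s ++ [a]) r)).sum
          + ((shuffle (x ++ [a]) y).map (fun s => F (s ++ [b]) r)).sum := by
      intro r
      rw [hshuf]
      simp [Multiset.map_map, Function.comp]
    have hR : ∀ r : ℝ, HasDerivAt
        (fun t => ((shuffle (x ++ [a]) (y ++ [b])).map (fun s => F s t)).sum)
        (lam a r * (F x r * F (y ++ [b]) r) + lam b r * (F (x ++ [a]) r * F y r)) r := by
      intro r
      have h1 : HasDerivAt
          (fun t => ((shuffle x (y ++ [b])).map (fun s => F (s ++ [a]) t)).sum)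
          (((shuffle x (y ++ [b])).map (fun s => lam a r * F s r)).sum) r :=
        multiset_hasDerivAt (fun w _ => hderF w a r)
      have h2 : HasDerivAt
          (fun t => ((shuffle (x ++ [a]) y).map (fun s => F (s ++ [b]) t)).sum)
          (((shuffle (x ++ [a]) y).map (fun s => lam b r * F s r)).sum) r :=
        multiset_hasDerivAt (fun w _ => hderF w b r)
      have e1 : (((shuffle x (y ++ [b])).map (fun s => lam a r * F s r)).sum)
          = lam a r * (F x r * F (y ++ [b]) r) := by
        rw [← ih1 r, ← Multiset.sum_map_mul_left]
      have e2 : (((shuffle (x ++ [a]) y).map (fun s => lam b r * F s r)).sum)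
          = lam b r * (F (x ++ [a]) r * F y r) := by
        rw [← ih2 r, ← Multiset.sum_map_mul_left]
      have := h1.add h2
      rw [e1, e2] at this
      have hfe : (fun t => ((shuffle (x ++ [a]) (y ++ [b])).map (fun s => F s t)).sum)
          = fun t => ((shuffle x (y ++ [b])).map (fun s => F (s ++ [a]) t)).sum
            + ((shuffle (x ++ [a]) y).map (fun s => F (s ++ [b]) t)).sum := funext hfun
      rw [hfe]
      exact this
    have hD : ∀ r : ℝ, HasDerivAt (fun t => F (x ++ [a]) t * F (y ++ [b]) t
        - ((shuffle (x ++ [a]) (y ++ [b])).map (fun s => F s t)).sum) 0 r := by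
      intro r
      have := (hL r).sub (hR r)
      convert this using 1
      case e'_9 => ring
      all_goals rfl
    have hconst : (fun t => F (x ++ [a]) t * F (y ++ [b]) t
          - ((shuffle (x ++ [a]) (y ++ [b])).map (fun s => F s t)).sum) t
        = (fun t => F (x ++ [a]) t * F (y ++ [b]) t
          - ((shuffle (x ++ [a]) (y ++ [b])).map (fun s => F s t)).sum) 0 :=
      is_const_of_deriv_eq_zero (fun r => (hD r).differentiableAt)
        (fun r => (hD r).deriv) t 0
    have hzR : ((shuffle (x ++ [a]) (y ++ [b])).map (fun s => F s 0)).sum = 0 := by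
      rw [hfun 0]
      simp [hzero]
    simp only [hzero, hzR, zero_mul, sub_zero] at hconst
    have : F (x ++ [a]) t * F (y ++ [b]) t
        - ((shuffle (x ++ [a]) (y ++ [b])).map (fun s => F s t)).sum = 0 := by
      rw [hconst]
    have hgoal := sub_eq_zero.mp this
    exact hgoal
end analytic

/-- The iterated-integral coefficients
`α(t)_{ℓ₁⋯ℓ_n} = ∫₀^t dt_n λ_{ℓ_n}(t_n) ∫₀^{t_n} dt_{n−1} λ_{ℓ_{n−1}}(t_{n−1}) ⋯ ∫₀^{t₂} dt₁ λ_{ℓ₁}(t₁)`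
(`α(t)_∅ = 1`) satisfy the shuffle relations, i.e. `α(t) ∈ G` for every `t`. -/
theorem stmt5 {A : Type*} [Countable A] (lam : A → ℝ → ℂ)
    (hcont : ∀ ℓ : A, Continuous (lam ℓ)) :
    ∀ t : ℝ, isGrp (fun w : List A => iterInt lam w.reverse t) := by
  intro t
  refine ⟨by simp [iterInt], fun w w' => ?_⟩
  exact key lam hcont (w.length + w'.length) w w' le_rfl t
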